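/- For all constants C_E ≥ 1, L ≥ 0, M ≥ 0, K ≥ 0, T > 0 there exists C ≥ 0 such that the following holds. Let E be a real Banach space, A : E →L[ℝ] E with ‖exp(-tA)‖ ≤ C_E for all t ≥ 0, let g : E → E be Lipschitz with constant L and satisfy ‖g(x)‖ ≤ M for all x ∈ E, let 0 < h ≤ 1, and let u : ℝ → E be differentiable on [0,T] with u'(t) = -A(u t) + g(u t) on [0,T]. Assume that for every t ∈ [0,T] the map σ ↦ exp(-(1-σ)hA)( g(exp(-σhA) (u t)) ) is Lipschitz on [0,1] with constant K·h. Define the Lawson–Euler approximations by u₀ = u 0 and u_{n+1} = exp(-hA)(u_n + h • g(u_n)). Then for every n ∈ ℕ with n·h ≤ T: ‖u(n h) - u_n‖ ≤ C · h. -/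

import Mathlib

set_option synthInstance.maxHeartbeats 1000000
set_option maxHeartbeats 1000000

/-- The operator exponential `exp(tA)` of a continuous linear operator. -/
noncomputable def opexp {E : Type*} [NormedAddCommGroup E] [NormedSpace ℝ E]
    [CompleteSpace E] (A : E →L[ℝ] E) (t : ℝ) : E →L[ℝ] E :=
  NormedSpace.exp (t • A)

section helpers
variable {E : Type} [NormedAddCommGroup E] [NormedSpace ℝ E] [CompleteSpace E] (A : E →L[ℝ] E)

lemma opexp_zero : opexp A 0 = 1 := by simp [opexp, NormedSpace.exp_zero]

lemma opexp_add (s t : ℝ) : opexp A (s + t) = opexp A s * opexp A t := by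
  let +nondep : NormedAlgebra ℚ (E →L[ℝ] E) := .restrictScalars ℚ ℝ (E →L[ℝ] E)
  rw [opexp, add_smul]
  refine NormedSpace.exp_add_of_commute ?_
  show (s • A) * (t • A) = (t • A) * (s • A)
  rw [smul_mul_assoc, smul_mul_assoc, mul_smul_comm, mul_smul_comm, smul_comm]

lemma opexp_comp (s t : ℝ) (x : E) : opexp A s (opexp A t x) = opexp A (s + t) x := by
  rw [opexp_add, ContinuousLinearMap.mul_apply]

lemma hasDerivAt_opexp (c s : ℝ) :
    HasDerivAt (fun s : ℝ => opexp A (s - c)) (opexp A (s - c) * A) s := by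
  have h1 := hasDerivAt_exp_smul_const (𝕂 := ℝ) A (s - c)
  have h2 : HasDerivAt (fun s : ℝ => s - c) 1 s := (hasDerivAt_id s).sub_const c
  have := HasDerivAt.scomp (𝕜 := ℝ) s h1 h2
  simpa [opexp, Function.comp_def] using this

lemma continuous_opexp : Continuous (fun s : ℝ => opexp A (s)) :=
  by
  let +nondep : NormedAlgebra ℚ (E →L[ℝ] E) := .restrictScalars ℚ ℝ (E →L[ℝ] E)
  exact NormedSpace.exp_continuous.comp (continuous_id.smul continuous_const)

lemma duhamel {T : ℝ} {u : ℝ → E} {g : E → E}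
    (hu : ∀ t ∈ Set.Icc (0:ℝ) T, HasDerivAt u (-(A (u t)) + g (u t)) t)
    (hgc : Continuous g)
    (a s0 : ℝ) (ha : 0 ≤ a) (hs0 : 0 ≤ s0) (haT : a + s0 ≤ T) :
    u (a + s0) - opexp A (-s0) (u a)
      = ∫ s in (0:ℝ)..s0, opexp A (-(s0 - s)) (g (u (a + s))) := by
  have hmem : ∀ s ∈ Set.uIcc (0:ℝ) s0, a + s ∈ Set.Icc (0:ℝ) T := by
    intro s hs
    rw [Set.uIcc_of_le hs0] at hs
    exact ⟨by linarith [hs.1], by linarith [hs.2]⟩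
  have hderiv : ∀ s ∈ Set.uIcc (0:ℝ) s0,
      HasDerivAt (fun s => opexp A (s - s0) (u (a + s)))
        (opexp A (s - s0) (g (u (a + s)))) s := by
    intro s hs
    have hc := hasDerivAt_opexp A s0 s
    have hu0 := hu (a + s) (hmem s hs)
    have hinner : HasDerivAt (fun s : ℝ => a + s) 1 s := (hasDerivAt_id s).const_add a
    have hu' : HasDerivAt (fun s : ℝ => u (a + s))
        (-(A (u (a + s))) + g (u (a + s))) s := by
      have := HasDerivAt.scomp (𝕜 := ℝ) s hu0 hinner
      simpa [Function.comp_def] using this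
    have := hc.clm_apply hu'
    simpa [ContinuousLinearMap.mul_apply, map_add, map_neg] using this
  have huc : ContinuousOn (fun s : ℝ => u (a + s)) (Set.uIcc (0:ℝ) s0) := by
    intro s hs
    exact (((hu (a+s) (hmem s hs)).continuousAt).comp
      (by continuity : Continuous fun s : ℝ => a + s).continuousAt).continuousWithinAt
  have hF : Continuous (fun s : ℝ => opexp A (s - s0)) :=
    (continuous_opexp A).comp (by continuity)
  have hint : IntervalIntegrable (fun s => opexp A (s - s0) (g (u (a + s))))
      MeasureTheory.volume 0 s0 :=
    (hF.continuousOn.clm_apply (hgc.comp_continuousOn huc)).intervalIntegrable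
  have := intervalIntegral.integral_eq_sub_of_hasDerivAt hderiv hint
  have h0 : (fun s => opexp A (s - s0) (g (u (a + s)))) = fun s => opexp A (-(s0 - s)) (g (u (a + s))) := by
    funext s; rw [neg_sub]
  rw [h0] at this
  rw [this]
  simp [opexp_zero, zero_sub]

lemma duhamel_integrable {T : ℝ} {u : ℝ → E} {g : E → E}
    (hu : ∀ t ∈ Set.Icc (0:ℝ) T, HasDerivAt u (-(A (u t)) + g (u t)) t)
    (hgc : Continuous g)
    (a s0 : ℝ) (ha : 0 ≤ a) (hs0 : 0 ≤ s0) (haT : a + s0 ≤ T) :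
    IntervalIntegrable (fun s => opexp A (-(s0 - s)) (g (u (a + s))))
      MeasureTheory.volume 0 s0 := by
  have hmem : ∀ s ∈ Set.uIcc (0:ℝ) s0, a + s ∈ Set.Icc (0:ℝ) T := by
    intro s hs
    rw [Set.uIcc_of_le hs0] at hs
    exact ⟨by linarith [hs.1], by linarith [hs.2]⟩
  have huc : ContinuousOn (fun s : ℝ => u (a + s)) (Set.uIcc (0:ℝ) s0) := by
    intro s hs
    exact (((hu (a+s) (hmem s hs)).continuousAt).comp
      (by continuity : Continuous fun s : ℝ => a + s).continuousAt).continuousWithinAt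
  have hF : Continuous (fun s : ℝ => opexp A (-(s0 - s))) :=
    (continuous_opexp A).comp (by continuity)
  exact (hF.continuousOn.clm_apply (hgc.comp_continuousOn huc)).intervalIntegrable

end helpers

lemma gron (lam beta : ℝ) (hlam : 0 ≤ lam) (hbeta : 0 ≤ beta) (a : ℕ → ℝ) (N : ℕ)
    (H : ∀ m ≤ N, a m ≤ lam * ∑ k ∈ Finset.range m, a k + beta * m) :
    ∀ m ≤ N, a m ≤ beta * m * (1 + lam) ^ m := by
  intro m
  induction m using Nat.strong_induction_on with
  | _ m ih =>
    intro hm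
    have h1 : ∑ k ∈ Finset.range m, a k
        ≤ ∑ k ∈ Finset.range m, beta * m * (1+lam)^k := by
      apply Finset.sum_le_sum
      intro k hk
      have hk' := Finset.mem_range.mp hk
      calc a k ≤ beta * k * (1+lam)^k := ih k hk' (le_trans hk'.le hm)
        _ ≤ beta * m * (1+lam)^k := by
            apply mul_le_mul_of_nonneg_right _ (by positivity)
            have hkm : (k:ℝ) ≤ m := Nat.cast_le.mpr hk'.le
            nlinarith
    have h3 : (∑ k ∈ Finset.range m, (1+lam)^k) * lam = (1+lam)^m - 1 := by
      have := geom_sum_mul (1+lam) m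
      simpa using this
    calc a m ≤ lam * ∑ k ∈ Finset.range m, a k + beta * m := H m hm
      _ ≤ lam * (beta * m * ∑ k ∈ Finset.range m, (1+lam)^k) + beta * m := by
          refine add_le_add_left (mul_le_mul_of_nonneg_left ?_ hlam) _
          exact le_trans h1 (le_of_eq (Finset.mul_sum _ _ _).symm)
      _ = beta * m * ((∑ k ∈ Finset.range m, (1+lam)^k) * lam) + beta * m := by ring
      _ = beta * m * (1+lam)^m := by rw [h3]; ring

/-- Global convergence theorem for Lawson methods (Theorem 4.6, case `p = 1`, Lawson–Euler):
under the uniform semigroup bound, global Lipschitz continuity and boundedness of `g`, and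
the commutator-type regularity condition along the exact solution, the Lawson–Euler scheme
converges with order one, uniformly in `A`, `h` and `n`. -/
theorem stmt_16 (C_E L M K T : ℝ) (hCE : 1 ≤ C_E) (hL : 0 ≤ L) (hM : 0 ≤ M)
    (hK : 0 ≤ K) (hT : 0 < T) :
    ∃ C : ℝ, 0 ≤ C ∧
      ∀ (E : Type) [NormedAddCommGroup E] [NormedSpace ℝ E] [CompleteSpace E]
        (A : E →L[ℝ] E),
        (∀ t : ℝ, 0 ≤ t → ‖opexp A (-t)‖ ≤ C_E) →
        ∀ g : E → E, LipschitzWith (Real.toNNReal L) g →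
          (∀ x : E, ‖g x‖ ≤ M) →
        ∀ h : ℝ, 0 < h → h ≤ 1 →
        ∀ u : ℝ → E,
          (∀ t ∈ Set.Icc (0 : ℝ) T, HasDerivAt u (-(A (u t)) + g (u t)) t) →
          (∀ t ∈ Set.Icc (0 : ℝ) T,
            LipschitzOnWith (Real.toNNReal (K * h))
              (fun σ : ℝ => opexp A (-((1 - σ) * h)) (g (opexp A (-(σ * h)) (u t))))
              (Set.Icc (0 : ℝ) 1)) →
        ∀ un : ℕ → E, un 0 = u 0 →
          (∀ n : ℕ, un (n + 1) = opexp A (-h) (un n + h • g (un n))) →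
          ∀ n : ℕ, (n : ℝ) * h ≤ T → ‖u ((n : ℝ) * h) - un n‖ ≤ C * h := by
  have hC0 : (0:ℝ) ≤ C_E := le_trans zero_le_one hCE
  refine ⟨C_E * ((C_E^2 * L * M + K) * T) * Real.exp (C_E^2 * L * T), by positivity, ?_⟩
  intro E _ _ _ A hAbd g hg hgM h hh hh1 u hu hlip un hun0 hrec n hnT
  have hD0 : (0:ℝ) ≤ C_E^2 * L * M + K := by positivity
  have hgc : Continuous g := hg.continuous
  have hbd : ∀ t : ℝ, 0 ≤ t → ∀ x : E, ‖opexp A (-t) x‖ ≤ C_E * ‖x‖ := fun t ht x =>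
    le_trans ((opexp A (-t)).le_opNorm x)
      (mul_le_mul_of_nonneg_right (hAbd t ht) (norm_nonneg x))
  have hLc : ∀ x y : E, ‖g x - g y‖ ≤ L * ‖x - y‖ := by
    intro x y
    have := hg.dist_le_mul x y
    rwa [dist_eq_norm, dist_eq_norm, Real.coe_toNNReal _ hL] at this
  -- a priori estimate
  have hapr : ∀ a s0 : ℝ, 0 ≤ a → 0 ≤ s0 → a + s0 ≤ T →
      ‖u (a + s0) - opexp A (-s0) (u a)‖ ≤ C_E * M * s0 := by
    intro a s0 ha hs0 haT
    rw [duhamel A hu hgc a s0 ha hs0 haT]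
    refine le_trans (intervalIntegral.norm_integral_le_of_norm_le_const
      (C := C_E * M) ?_) ?_
    · intro s hs
      rw [Set.uIoc_of_le hs0] at hs
      refine le_trans (hbd (s0 - s) (by linarith [hs.2]) _) ?_
      exact mul_le_mul_of_nonneg_left (hgM _) hC0
    · rw [sub_zero, abs_of_nonneg hs0]
  -- local error estimate
  have hdelta : ∀ k : ℕ, (k:ℝ)*h + h ≤ T →
      ‖u ((k:ℝ)*h + h) - opexp A (-h) (u ((k:ℝ)*h))
        - h • opexp A (-h) (g (u ((k:ℝ)*h)))‖ ≤ (C_E^2*L*M + K) * h^2 := by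
    intro k hkT
    set a := (k:ℝ)*h with hadef
    have ha : 0 ≤ a := by positivity
    have h1 := duhamel A hu hgc a h ha hh.le hkT
    have hint1 := duhamel_integrable A hu hgc a h ha hh.le hkT
    have h2 : u (a+h) - opexp A (-h) (u a) - h • opexp A (-h) (g (u a))
        = ∫ s in (0:ℝ)..h,
            (opexp A (-(h - s)) (g (u (a + s))) - opexp A (-h) (g (u a))) := by
      rw [intervalIntegral.integral_sub hint1 intervalIntegrable_const, ← h1,
        intervalIntegral.integral_const, sub_zero]
    rw [h2]
    refine le_trans (intervalIntegral.norm_integral_le_of_norm_le_const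
      (C := (C_E^2*L*M + K)*h) ?_) ?_
    · intro s hs
      rw [Set.uIoc_of_le hh.le] at hs
      obtain ⟨hs0, hsh⟩ := hs
      set b := opexp A (-(h - s)) (g (opexp A (-s) (u a))) with hbdef
      have htri : opexp A (-(h-s)) (g (u (a+s))) - opexp A (-h) (g (u a))
          = (opexp A (-(h-s)) (g (u (a+s))) - b) + (b - opexp A (-h) (g (u a))) := by
        abel
      rw [htri]
      have hX1 : ‖opexp A (-(h-s)) (g (u (a+s))) - b‖ ≤ C_E^2*L*M*h := by
        rw [hbdef, ← map_sub]
        refine le_trans (hbd _ (by linarith) _) ?_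
        have happ := hapr a s ha hs0.le (by linarith)
        calc C_E * ‖g (u (a+s)) - g (opexp A (-s) (u a))‖
            ≤ C_E * (L * (C_E * M * s)) := by
              refine mul_le_mul_of_nonneg_left ?_ hC0
              exact le_trans (hLc _ _) (mul_le_mul_of_nonneg_left happ hL)
          _ = (C_E^2*L*M) * s := by ring
          _ ≤ C_E^2*L*M*h := mul_le_mul_of_nonneg_left hsh (by positivity)
      have hX2 : ‖b - opexp A (-h) (g (u a))‖ ≤ K * h := by
        have hmemT : a ∈ Set.Icc (0:ℝ) T := ⟨ha, by linarith⟩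
        have hl := hlip a hmemT
        have hm1 : s/h ∈ Set.Icc (0:ℝ) 1 :=
          ⟨by positivity, by rw [div_le_one hh]; exact hsh⟩
        have hm0 : (0:ℝ) ∈ Set.Icc (0:ℝ) 1 := ⟨le_refl 0, zero_le_one⟩
        have hdl := hl.dist_le_mul (s/h) hm1 0 hm0
        rw [Real.coe_toNNReal _ (by positivity), dist_eq_norm, dist_eq_norm] at hdl
        have e1 : (1 - s/h)*h = h - s := by field_simp
        have e2 : (s/h)*h = s := div_mul_cancel₀ s (ne_of_gt hh)
        simp only [e1, e2, sub_zero, one_mul, zero_mul, neg_zero, opexp_zero,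
          ContinuousLinearMap.one_apply] at hdl
        rw [hbdef]
        rw [Real.norm_eq_abs, abs_of_nonneg (by positivity : (0:ℝ) ≤ s/h)] at hdl
        refine le_trans hdl ?_
        have heq : K * h * (s/h) = K * s := by field_simp
        rw [heq]
        exact mul_le_mul_of_nonneg_left hsh hK
      calc ‖(opexp A (-(h-s)) (g (u (a+s))) - b) + (b - opexp A (-h) (g (u a)))‖
          ≤ ‖opexp A (-(h-s)) (g (u (a+s))) - b‖ + ‖b - opexp A (-h) (g (u a))‖ :=
            norm_add_le _ _
        _ ≤ C_E^2*L*M*h + K*h := add_le_add hX1 hX2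
        _ = (C_E^2*L*M + K)*h := by ring
    · rw [sub_zero, abs_of_nonneg hh.le]
      exact le_of_eq (by ring)
  -- error and defect sequences
  set e : ℕ → E := fun k => u ((k:ℝ) * h) - un k with he
  set d : ℕ → E := fun k => e (k+1) - opexp A (-h) (e k) with hd
  -- defect bound
  have hdbd : ∀ k : ℕ, (k:ℝ)*h + h ≤ T →
      ‖d k‖ ≤ C_E * L * h * ‖e k‖ + (C_E^2*L*M + K) * h^2 := by
    intro k hkT
    have hsplit : d k = (u ((k:ℝ)*h + h) - opexp A (-h) (u ((k:ℝ)*h))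
          - h • opexp A (-h) (g (u ((k:ℝ)*h))))
        + h • opexp A (-h) (g (u ((k:ℝ)*h)) - g (un k)) := by
      have hcast : ((k+1 : ℕ) : ℝ) * h = (k:ℝ)*h + h := by push_cast; ring
      rw [hd]
      simp only [he, hcast, hrec k, map_add, map_sub, map_smul, smul_sub]
      abel
    rw [hsplit]
    refine le_trans (norm_add_le _ _) ?_
    rw [add_comm]
    refine add_le_add ?_ (hdelta k hkT)
    rw [norm_smul, Real.norm_eq_abs, abs_of_nonneg hh.le]
    calc h * ‖opexp A (-h) (g (u ((k:ℝ)*h)) - g (un k))‖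
        ≤ h * (C_E * (L * ‖u ((k:ℝ)*h) - un k‖)) := by
          refine mul_le_mul_of_nonneg_left ?_ hh.le
          exact le_trans (hbd h hh.le _) (mul_le_mul_of_nonneg_left (hLc _ _) hC0)
      _ = C_E * L * h * ‖e k‖ := by rw [he]; ring
  -- representation formula
  have hrep : ∀ m : ℕ, e m = ∑ k ∈ Finset.range m,
      opexp A (-(((m - 1 - k : ℕ) : ℝ) * h)) (d k) := by
    intro m
    induction m with
    | zero => simp [he, hun0]
    | succ m ih =>
      have hstep : e (m+1) = opexp A (-h) (e m) + d m := by rw [hd]; exact (add_sub_cancel _ _).symm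
      rw [hstep, ih, map_sum, Finset.sum_range_succ]
      congr 1
      · refine Finset.sum_congr rfl ?_
        intro k hk
        have hk' := Finset.mem_range.mp hk
        rw [opexp_comp]
        congr 1
        have hnat : (m + 1 - 1 - k : ℕ) = (m - 1 - k) + 1 := by omega
        rw [hnat]
        push_cast
        ring
      · have hnat : (m + 1 - 1 - m : ℕ) = 0 := by omega
        rw [hnat]
        simp [opexp_zero]
  -- Gronwall setup
  have H : ∀ m ≤ n, ‖e m‖ ≤ (C_E^2 * L * h) * ∑ k ∈ Finset.range m, ‖e k‖
      + (C_E * ((C_E^2*L*M + K) * h^2)) * m := by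
    intro m hm
    rw [hrep m]
    refine le_trans (norm_sum_le _ _) ?_
    have hterm : ∀ k ∈ Finset.range m,
        ‖opexp A (-(((m - 1 - k : ℕ) : ℝ) * h)) (d k)‖
          ≤ (C_E^2 * L * h) * ‖e k‖ + C_E * ((C_E^2*L*M + K) * h^2) := by
      intro k hk
      have hk' := Finset.mem_range.mp hk
      have hkT : (k:ℝ)*h + h ≤ T := by
        have : ((k:ℝ) + 1) ≤ (m:ℝ) := by exact_mod_cast hk'
        have hmn : (m:ℝ) ≤ (n:ℝ) := by exact_mod_cast hm
        nlinarith
      refine le_trans (hbd _ (by positivity) _) ?_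
      calc C_E * ‖d k‖ ≤ C_E * (C_E * L * h * ‖e k‖ + (C_E^2*L*M + K) * h^2) :=
            mul_le_mul_of_nonneg_left (hdbd k hkT) hC0
        _ = (C_E^2 * L * h) * ‖e k‖ + C_E * ((C_E^2*L*M + K) * h^2) := by ring
    refine le_trans (Finset.sum_le_sum hterm) ?_
    rw [Finset.sum_add_distrib, ← Finset.mul_sum, Finset.sum_const, Finset.card_range,
      nsmul_eq_mul]
    exact le_of_eq (by ring)
  have hg2 := gron (C_E^2 * L * h) (C_E * ((C_E^2*L*M + K) * h^2)) (by positivity)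
    (by positivity) (fun k => ‖e k‖) n H n (le_refl n)
  -- final estimate
  have hEn : ‖e n‖ ≤ C_E * ((C_E^2*L*M + K) * T) * Real.exp (C_E^2*L*T) * h := by
    refine le_trans hg2 ?_
    have hx : (1 + C_E^2 * L * h) ^ n ≤ Real.exp (C_E^2 * L * T) := by
      calc (1 + C_E^2 * L * h) ^ n ≤ Real.exp (C_E^2 * L * h) ^ n := by
            refine pow_le_pow_left₀ (by positivity) ?_ n
            linarith [Real.add_one_le_exp (C_E^2 * L * h)]
        _ = Real.exp ((n:ℝ) * (C_E^2 * L * h)) := by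
            rw [← Real.exp_nat_mul]
        _ ≤ Real.exp (C_E^2 * L * T) := by
            apply Real.exp_le_exp.mpr
            have : (n:ℝ) * (C_E^2 * L * h) = (C_E^2 * L) * ((n:ℝ)*h) := by ring
            rw [this]
            exact mul_le_mul_of_nonneg_left hnT (by positivity)
    have hy : C_E * ((C_E^2*L*M + K) * h^2) * n ≤ C_E * ((C_E^2*L*M + K) * T) * h := by
      have : C_E * ((C_E^2*L*M + K) * h^2) * n = (C_E * ((C_E^2*L*M + K) * h)) * ((n:ℝ)*h) := by
        ring
      rw [this]
      calc (C_E * ((C_E^2*L*M + K) * h)) * ((n:ℝ)*h)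
          ≤ (C_E * ((C_E^2*L*M + K) * h)) * T := by
            exact mul_le_mul_of_nonneg_left hnT (by positivity)
        _ = C_E * ((C_E^2*L*M + K) * T) * h := by ring
    calc C_E * ((C_E^2*L*M + K) * h^2) * n * (1 + C_E^2 * L * h) ^ n
        ≤ (C_E * ((C_E^2*L*M + K) * T) * h) * Real.exp (C_E^2 * L * T) := by
          refine mul_le_mul hy hx (by positivity) (by positivity)
      _ = C_E * ((C_E^2*L*M + K) * T) * Real.exp (C_E^2*L*T) * h := by ring
  have : u ((n:ℝ)*h) - un n = e n := by rw [he]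
  rw [this]
  exact le_trans hEn (le_of_eq (by ring))
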